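/- arXiv:2506.05290 — 3 statements merged into one kernel-verified Lean document; each statement's English description precedes it below -/
import Mathlib

section
/- Let ε > 0, n ∈ ℕ, p = (1/2)e^{-ε/2}. Define V⁰ = B + Z and V¹ = 1 + n - B + Z where B ~ Binomial(n, p) and Z ~ Lap(1/ε), independent. Then for any N ≥ n + 1, ln(P(V¹ ≥ N) / P(V⁰ ≥ N)) = ε + n·ε', where ε' = ln((p + (1-p)e^{ε}) / (p·e^{ε} + 1 - p)) > 0. -/
open MeasureTheory Real

/-- `P(B = k)` for `B ~ Binomial(n, p)`. -/
noncomputable def binomProb (n k : ℕ) (p : ℝ) : ℝ :=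
  (n.choose k : ℝ) * p ^ k * (1 - p) ^ (n - k)

/-- Tail probability `P(Z ≥ z)` of a Laplace random variable with scale `1/ε`. -/
noncomputable def lapTail (ε z : ℝ) : ℝ :=
  ∫ x in Set.Ici z, (ε / 2) * Real.exp (-ε * |x|)

lemma lapTail_eq {ε z : ℝ} (hε : 0 < ε) (hz : 0 ≤ z) :
    lapTail ε z = (1/2) * Real.exp (-ε * z) := by
  have h1 : lapTail ε z = ∫ x in Set.Ioi z, (ε / 2) * Real.exp (-ε * x) := by
    rw [lapTail, MeasureTheory.integral_Ici_eq_integral_Ioi]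
    apply MeasureTheory.setIntegral_congr_fun measurableSet_Ioi
    intro x hx
    have : 0 ≤ x := le_trans hz (le_of_lt hx)
    simp [abs_of_nonneg this]
  rw [h1]
  have key : ∫ x in Set.Ioi z, (ε / 2) * Real.exp (-ε * x)
      = 0 - (-(1/2) * Real.exp (-ε * z)) := by
    apply MeasureTheory.integral_Ioi_of_hasDerivAt_of_tendsto
    · have : Continuous (fun x : ℝ => -(1/2) * Real.exp (-ε * x)) :=
        continuous_const.mul (Real.continuous_exp.comp (continuous_const.mul continuous_id))
      exact this.continuousWithinAt
    · intro x hx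
      have h : HasDerivAt (fun x : ℝ => -(1/2) * Real.exp (-ε * x))
          (-(1/2) * (Real.exp (-ε * x) * (-ε))) x := by
        have := ((Real.hasDerivAt_exp (-ε * x)).comp x ((hasDerivAt_id x).const_mul (-ε)))
        simpa using this.const_mul (-(1/2) : ℝ)
      exact h.congr_deriv (by ring)
    · exact ((exp_neg_integrableOn_Ioi z hε).const_mul _)
    · have h2 : Filter.Tendsto (fun x : ℝ => Real.exp (-(ε * x))) Filter.atTop (nhds 0) :=
        Real.tendsto_exp_neg_atTop_nhds_zero.comp (Filter.Tendsto.const_mul_atTop hε Filter.tendsto_id)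
      have h3 : Filter.Tendsto (fun x : ℝ => Real.exp (-ε * x)) Filter.atTop (nhds 0) := by
        simpa [neg_mul] using h2
      simpa using (h3.const_mul (-(1/2) : ℝ))
  rw [key]; ring

lemma sum_binom (n : ℕ) (p a : ℝ) :
    ∑ k ∈ Finset.range (n+1), binomProb n k p * a ^ k = (p * a + (1 - p)) ^ n := by
  rw [add_pow]
  apply Finset.sum_congr rfl
  intro k hk
  simp only [binomProb, mul_pow]
  ring

/-- `V⁰ = B + Z ≥ N` iff `Z ≥ N - B`, and `V¹ = 1 + n - B + Z ≥ N` iff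
`Z ≥ N - 1 - n + B`.  The log-ratio of the two tail probabilities equals
`ε + n·ε'` with `ε' = ln((p + (1-p)eᵉ)/(p·eᵉ + 1 - p)) > 0`. -/
theorem log_ratio_eq_eps_plus_n_eps' (ε : ℝ) (hε : 0 < ε) (n : ℕ)
    (p : ℝ) (hp : p = (1/2) * Real.exp (-ε / 2))
    (N : ℝ) (hN : (n : ℝ) + 1 ≤ N)
    (ε' : ℝ)
    (hε' : ε' = Real.log ((p + (1 - p) * Real.exp ε) / (p * Real.exp ε + 1 - p))) :
    0 < ε' ∧
    Real.log
        ((∑ k ∈ Finset.range (n + 1), binomProb n k p * lapTail ε (N - 1 - n + k)) /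
         (∑ k ∈ Finset.range (n + 1), binomProb n k p * lapTail ε (N - k)))
      = ε + n * ε' := by
  have hp0 : 0 < p := by rw [hp]; positivity
  have hp1 : p < 1/2 := by
    rw [hp]
    nlinarith [Real.exp_lt_one_iff.mpr (show (-ε/2 : ℝ) < 0 by linarith), Real.exp_pos (-ε/2)]
  have hb1 : (1 : ℝ) < Real.exp ε := by nlinarith [Real.add_one_lt_exp (ne_of_gt hε)]
  set a := Real.exp (-ε) with ha
  set b := Real.exp ε with hb
  have ha0 : 0 < a := Real.exp_pos _
  have hb0 : 0 < b := Real.exp_pos _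
  have hA0 : 0 < p * a + (1 - p) := by nlinarith
  have hB0 : 0 < p * b + (1 - p) := by nlinarith
  have hab : a * b = 1 := by rw [ha, hb, ← Real.exp_add]; simp
  -- ε' rewrite
  have hbA : p + (1 - p) * b = b * (p * a + (1 - p)) := by
    have : b * (p * a) = p := by
      calc b * (p * a) = p * (a * b) := by ring
      _ = p := by rw [hab]; ring
    nlinarith [this]
  have hε'2 : ε' = ε + Real.log (p * a + (1 - p)) - Real.log (p * b + (1 - p)) := by
    rw [hε']
    have : (p + (1 - p) * b) / (p * Real.exp ε + 1 - p) = b * (p * a + (1 - p)) / (p * b + (1 - p)) := by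
      rw [hbA, ← hb]; ring
    rw [this, Real.log_div (by positivity) (by nlinarith), Real.log_mul (by positivity) (by positivity), hb, Real.log_exp]
  have hε'pos : 0 < ε' := by
    rw [hε']
    apply Real.log_pos
    rw [lt_div_iff₀ (by nlinarith)]
    nlinarith
  refine ⟨hε'pos, ?_⟩
  -- rewrite the sums
  have hnum : (∑ k ∈ Finset.range (n + 1), binomProb n k p * lapTail ε (N - 1 - n + k))
      = (1/2) * Real.exp (-ε * (N - 1 - n)) * (p * a + (1 - p)) ^ n := by
    rw [← sum_binom n p a, Finset.mul_sum]
    apply Finset.sum_congr rfl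
    intro k hk
    have hk' : (k : ℝ) ≤ n := by exact_mod_cast Nat.le_of_lt_succ (Finset.mem_range.mp hk)
    have hz : 0 ≤ N - 1 - n + k := by linarith
    rw [lapTail_eq hε hz, ha, ← Real.exp_nat_mul,
      show (-ε * (N - 1 - ↑n + ↑k)) = -ε * (N - 1 - ↑n) + ↑k * (-ε) by ring, Real.exp_add]
    ring
  have hden : (∑ k ∈ Finset.range (n + 1), binomProb n k p * lapTail ε (N - k))
      = (1/2) * Real.exp (-ε * N) * (p * b + (1 - p)) ^ n := by
    rw [← sum_binom n p b, Finset.mul_sum]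
    apply Finset.sum_congr rfl
    intro k hk
    have hk' : (k : ℝ) ≤ n := by exact_mod_cast Nat.le_of_lt_succ (Finset.mem_range.mp hk)
    have hz : 0 ≤ N - k := by linarith
    rw [lapTail_eq hε hz, hb, ← Real.exp_nat_mul,
      show (-ε * (N - ↑k)) = -ε * N + ↑k * ε by ring, Real.exp_add]
    ring
  rw [hnum, hden, Real.log_div (by positivity) (by positivity)]
  rw [Real.log_mul (by positivity) (by positivity), Real.log_mul (by positivity) (by positivity)]
  rw [Real.log_mul (by positivity) (by positivity), Real.log_mul (by positivity) (by positivity)]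
  rw [Real.log_exp, Real.log_exp, Real.log_pow, Real.log_pow]
  rw [hε'2]
  ring
end

section
/- Let ε > 0, n ∈ ℕ, p = (1/2)e^{-ε/2}, and let B ~ Binomial(n, p). Suppose P(B > n/2) > 0 and n ≥ (4 ln 2)/(1 - e^{-ε/2})². Then for any ε₀ with 0 < ε₀ < ε, e^{ε - ε₀} · P(n - B > n/2) / P(B > n/2) ≥ e^{ε - ε₀} · exp(n·(1/2 - p)²). -/
open Real

theorem ratio_lower_bound (ε : ℝ) (hε : 0 < ε) (n : ℕ)
    (p : ℝ) (hp : p = (1/2) * Real.exp (-ε / 2))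
    (hn : (4 * Real.log 2) / (1 - Real.exp (-ε / 2)) ^ 2 ≤ (n : ℝ))
    (hpos : 0 < ∑ k ∈ Finset.range (n + 1),
        if (n : ℝ) / 2 < (k : ℝ) then binomProb n k p else 0)
    (ε₀ : ℝ) (hε₀ : 0 < ε₀) (hε₀ε : ε₀ < ε) :
    Real.exp (ε - ε₀) * Real.exp ((n : ℝ) * (1/2 - p) ^ 2)
      ≤ Real.exp (ε - ε₀) *
          ((∑ k ∈ Finset.range (n + 1),
              if (n : ℝ) / 2 < (n : ℝ) - (k : ℝ) then binomProb n k p else 0) /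
           (∑ k ∈ Finset.range (n + 1),
              if (n : ℝ) / 2 < (k : ℝ) then binomProb n k p else 0)) := by
  set q : ℝ := 1 - p with hq
  have hexp1 : Real.exp (-ε / 2) < 1 := by
    apply Real.exp_lt_one_iff.mpr; linarith
  have hp0 : 0 < p := by rw [hp]; positivity
  have hphalf : p < 1/2 := by rw [hp]; linarith
  have hq0 : (0:ℝ) < q := by simp only [hq]; linarith
  have hpq : p < q := by simp only [hq]; linarith
  -- c = (1/2 - p)^2
  set c : ℝ := (1/2 - p)^2 with hc
  have hc0 : 0 < c := by rw [hc]; exact pow_pos (by linarith) 2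
  have hnc : Real.log 2 ≤ (n:ℝ) * c := by
    have h4c : (1 - Real.exp (-ε / 2))^2 = 4 * c := by
      have : Real.exp (-ε/2) = 2 * p := by rw [hp]; ring
      rw [show -ε / 2 = -ε/2 by ring, this, hc]; ring
    rw [h4c] at hn
    rw [div_le_iff₀ (by linarith)] at hn
    nlinarith
  have hb0 : ∀ k, 0 ≤ binomProb n k p := by
    intro k; unfold binomProb; positivity
  -- total sum is 1
  have htot : ∑ k ∈ Finset.range (n+1), binomProb n k p = 1 := by
    have h := add_pow p q n
    rw [show p + q = 1 by simp [hq], one_pow] at h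
    calc ∑ k ∈ Finset.range (n+1), binomProb n k p
        = ∑ k ∈ Finset.range (n+1), p ^ k * q ^ (n-k) * (n.choose k : ℝ) :=
          Finset.sum_congr rfl fun k _ => by unfold binomProb; ring
      _ = 1 := h.symm
  -- Chernoff bound on the upper tail
  set β : ℝ := Real.exp (-(2 * ((n:ℝ) * c))) with hβ
  have hβ0 : 0 < β := Real.exp_pos _
  set Sge : ℝ := ∑ k ∈ Finset.range (n+1),
      if (n : ℝ) / 2 ≤ (k : ℝ) then binomProb n k p else 0 with hSge
  have hSgeβ : Sge ≤ β := by
    have hterm : ∀ k ∈ Finset.range (n+1),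
        (if (n : ℝ) / 2 ≤ (k : ℝ) then binomProb n k p else 0)
          ≤ (n.choose k : ℝ) * (q^n * Real.sqrt ((p/q)^n)) := by
      intro k hk
      have hkn : k ≤ n := Nat.lt_succ_iff.mp (Finset.mem_range.mp hk)
      split_ifs with h
      · unfold binomProb
        rw [mul_assoc]
        apply mul_le_mul_of_nonneg_left _ (by positivity)
        have hkey : p^k * q^(n-k) = q^n * (p/q)^k := by
          rw [div_pow, ← Nat.sub_add_cancel hkn, pow_add]
          field_simp
          simp only [Nat.add_sub_cancel]
        rw [hkey]
        apply mul_le_mul_of_nonneg_left _ (by positivity)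
        rw [Real.le_sqrt (by positivity) (by positivity), ← pow_mul]
        apply pow_le_pow_of_le_one (by positivity) (by
          rw [div_le_one hq0]; linarith)
        exact_mod_cast (by linarith : (n:ℝ) ≤ (k:ℝ) * 2)
      · positivity
    calc Sge ≤ ∑ k ∈ Finset.range (n+1),
          (n.choose k : ℝ) * (q^n * Real.sqrt ((p/q)^n)) :=
        Finset.sum_le_sum hterm
      _ = 2^n * (q^n * Real.sqrt ((p/q)^n)) := by
          rw [← Finset.sum_mul]
          congr 1
          exact_mod_cast Nat.sum_range_choose n
      _ = Real.sqrt ((4*p*q)^n) := by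
          rw [show (4*p*q) = (2*q)^2 * (p/q) by field_simp; ring,
            mul_pow, ← pow_mul, mul_comm 2 n, pow_mul,
            Real.sqrt_mul (by positivity), Real.sqrt_sq (by positivity), mul_pow]
          ring
      _ ≤ β := by
          have h1 : 4*p*q ≤ Real.exp (-(4*c)) := by
            have := Real.add_one_le_exp (-(4*c))
            have h2 : 4*p*q = 1 - 4*c := by simp only [hq, hc]; ring
            linarith
          have h2 : (4*p*q)^n ≤ (Real.exp (-(4*c)))^n :=
            pow_le_pow_left₀ (by positivity) h1 n
          have h3 : (Real.exp (-(4*c)))^n = β^2 := by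
            rw [hβ, ← Real.exp_nat_mul, ← Real.exp_nat_mul,
              show ((2:ℕ):ℝ) * -(2 * ((n:ℝ)*c)) = (n:ℝ) * -(4*c) by push_cast; ring]
          calc Real.sqrt ((4*p*q)^n) ≤ Real.sqrt (β^2) :=
              Real.sqrt_le_sqrt (h3 ▸ h2)
            _ = β := Real.sqrt_sq hβ0.le
  set S₁ : ℝ := ∑ k ∈ Finset.range (n+1),
      if (n : ℝ) / 2 < (k : ℝ) then binomProb n k p else 0 with hS₁
  set S₂ : ℝ := ∑ k ∈ Finset.range (n+1),
      if (n : ℝ) / 2 < (n : ℝ) - (k : ℝ) then binomProb n k p else 0 with hS₂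
  have hS1ge : S₁ ≤ Sge := by
    apply Finset.sum_le_sum
    intro k _
    split_ifs with h1 h2 h3 <;>
      first | exact le_rfl | exact absurd h1.le h2 | exact hb0 k
  have hsplit : S₂ + Sge = 1 := by
    rw [hS₂, hSge, ← Finset.sum_add_distrib, ← htot]
    apply Finset.sum_congr rfl
    intro k _
    by_cases h : (n:ℝ)/2 ≤ (k:ℝ)
    · rw [if_neg (by linarith), if_pos h, zero_add]
    · push_neg at h
      rw [if_pos (by linarith), if_neg (by linarith), add_zero]
  -- arithmetic finish
  apply mul_le_mul_of_nonneg_left _ (Real.exp_pos _).le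
  rw [le_div_iff₀ hpos]
  set x : ℝ := Real.exp (-((n:ℝ) * c)) with hx
  have hx12 : x ≤ 1/2 := by
    rw [hx]
    calc Real.exp (-((n:ℝ)*c)) ≤ Real.exp (-(Real.log 2)) :=
        Real.exp_le_exp.mpr (by linarith)
      _ = 1/2 := by rw [Real.exp_neg, Real.exp_log two_pos]; norm_num
  have hβx : β = x^2 := by
    rw [hβ, hx, ← Real.exp_nat_mul]
    congr 1; push_cast; ring
  have h1 : Real.exp ((n:ℝ) * (1/2 - p)^2) * S₁ ≤ x⁻¹ * β := by
    apply mul_le_mul (le_of_eq _) (hS1ge.trans hSgeβ) hpos.le (by positivity)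
    rw [hx, ← Real.exp_neg, neg_neg]
  have hx0 : 0 < x := Real.exp_pos _
  have h2 : x⁻¹ * β = x := by rw [hβx]; field_simp
  have h3 : x ≤ 1 - β := by rw [hβx]; nlinarith
  have h4 : 1 - β ≤ S₂ := by linarith [hSgeβ, hsplit]
  have h5 : Real.exp ((n:ℝ) * (1/2 - p)^2) * S₁ ≤ x := by rw [← h2]; exact h1
  linarith
end

section
/- Let a be a scalar attribution function with maximum attributable value a^max, and let S₁, …, S_n ⊆ I be pairwise disjoint support sets with one-hot encodings H₁, …, H_n. For inputs F, F' (tuples of k event sets), we have Σ_{i=1}^{n} ‖A_{a,S_i,H_i}(F) - A_{a,S_i,H_i}(F')‖₁ ≤ 2·a^max, where A_{a,S,H}(F) = Σ_j Σ_{f ∈ F_j ∩ S} a_F(f)·H(f). -/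
lemma one_side_bound {I : Type*} [DecidableEq I]
    (k n : ℕ) (m : Fin n → ℕ)
    (a : (Fin k → Finset I) → I → ℝ) (ha : ∀ F f, 0 ≤ a F f)
    (amax : ℝ) (hamax : ∀ F : Fin k → Finset I, (∑ j, ∑ f ∈ F j, a F f) ≤ amax)
    (S : Fin n → Finset I)
    (hdisj : ∀ i i', i ≠ i' → Disjoint (S i) (S i'))
    (H : (i : Fin n) → I → Fin (m i) → ℝ)
    (hH01 : ∀ i f c, H i f c = 0 ∨ H i f c = 1)
    (hH : ∀ i f, ∑ c, |H i f c| = 1)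
    (F : Fin k → Finset I) :
    ∑ i, ∑ c, |∑ j, ∑ f ∈ (F j ∩ S i), a F f * H i f c| ≤ amax := by
  have hHnn : ∀ i f c, 0 ≤ H i f c := by
    intro i f c; rcases hH01 i f c with h | h <;> simp [h]
  have hH1 : ∀ i f, ∑ c, H i f c = 1 := by
    intro i f
    rw [← hH i f]
    exact Finset.sum_congr rfl fun c _ => (abs_of_nonneg (hHnn i f c)).symm
  have habs : ∀ i c, |∑ j, ∑ f ∈ (F j ∩ S i), a F f * H i f c|
      = ∑ j, ∑ f ∈ (F j ∩ S i), a F f * H i f c := by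
    intro i c
    apply abs_of_nonneg
    exact Finset.sum_nonneg fun j _ => Finset.sum_nonneg fun f _ =>
      mul_nonneg (ha F f) (hHnn i f c)
  calc ∑ i, ∑ c, |∑ j, ∑ f ∈ (F j ∩ S i), a F f * H i f c|
      = ∑ i, ∑ j, ∑ f ∈ (F j ∩ S i), a F f := by
        refine Finset.sum_congr rfl fun i _ => ?_
        simp_rw [habs i]
        rw [Finset.sum_comm]
        refine Finset.sum_congr rfl fun j _ => ?_
        rw [Finset.sum_comm]
        refine Finset.sum_congr rfl fun f _ => ?_
        rw [← Finset.mul_sum, hH1 i f, mul_one]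
    _ = ∑ j, ∑ i, ∑ f ∈ (F j ∩ S i), a F f := Finset.sum_comm
    _ ≤ ∑ j, ∑ f ∈ F j, a F f := by
        refine Finset.sum_le_sum fun j _ => ?_
        have hd : ((Finset.univ : Finset (Fin n)) : Set (Fin n)).PairwiseDisjoint
            (fun i => F j ∩ S i) := by
          intro i _ i' _ hii'
          exact Finset.disjoint_left.2 fun x hx hx' => by
            exact (Finset.disjoint_left.1 (hdisj i i' hii'))
              (Finset.mem_inter.1 hx).2 (Finset.mem_inter.1 hx').2
        rw [← Finset.sum_biUnion hd]
        refine Finset.sum_le_sum_of_subset_of_nonneg ?_ fun f _ _ => ha F f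
        intro x hx
        rcases Finset.mem_biUnion.1 hx with ⟨i, _, hxi⟩
        exact (Finset.mem_inter.1 hxi).1
    _ ≤ amax := hamax F

/-- Correlated histogram sensitivity: for pairwise disjoint support sets
`S₁, …, Sₙ`, the total L1 change across the corresponding histogram reports is
bounded by `2·a^max`. -/
theorem correlated_histogram_sensitivity {I : Type*} [DecidableEq I]
    (k n : ℕ) (m : Fin n → ℕ)
    (a : (Fin k → Finset I) → I → ℝ) (ha : ∀ F f, 0 ≤ a F f)
    (amax : ℝ) (hamax : ∀ F : Fin k → Finset I, (∑ j, ∑ f ∈ F j, a F f) ≤ amax)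
    (S : Fin n → Finset I)
    (hdisj : ∀ i i', i ≠ i' → Disjoint (S i) (S i'))
    (H : (i : Fin n) → I → Fin (m i) → ℝ)
    (hH01 : ∀ i f c, H i f c = 0 ∨ H i f c = 1)
    (hH : ∀ i f, ∑ c, |H i f c| = 1)
    (F F' : Fin k → Finset I) :
    ∑ i, ∑ c,
        |(∑ j, ∑ f ∈ (F j ∩ S i), a F f * H i f c) -
          (∑ j, ∑ f ∈ (F' j ∩ S i), a F' f * H i f c)|
      ≤ 2 * amax := by
  have h1 := one_side_bound k n m a ha amax hamax S hdisj H hH01 hH F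
  have h2 := one_side_bound k n m a ha amax hamax S hdisj H hH01 hH F'
  calc ∑ i, ∑ c,
        |(∑ j, ∑ f ∈ (F j ∩ S i), a F f * H i f c) -
          (∑ j, ∑ f ∈ (F' j ∩ S i), a F' f * H i f c)|
      ≤ ∑ i, ∑ c,
        (|∑ j, ∑ f ∈ (F j ∩ S i), a F f * H i f c| +
          |∑ j, ∑ f ∈ (F' j ∩ S i), a F' f * H i f c|) := by
        refine Finset.sum_le_sum fun i _ => Finset.sum_le_sum fun c _ => ?_
        exact abs_sub _ _
    _ = (∑ i, ∑ c, |∑ j, ∑ f ∈ (F j ∩ S i), a F f * H i f c|) +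
        (∑ i, ∑ c, |∑ j, ∑ f ∈ (F' j ∩ S i), a F' f * H i f c|) := by
        simp [Finset.sum_add_distrib]
    _ ≤ amax + amax := add_le_add h1 h2
    _ = 2 * amax := by ring
end
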